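/- Let m ≥ 1 be an integer, let σ: ℝ → ℝ be defined by σ(r) = cos(r)^{2m} for |r| ≤ π/2 and σ(r) = 0 for |r| > π/2, let Ω ⊂ ℝ^d be open, let φ: Ω → ℝ be continuously differentiable with |∇φ(x)| ≤ c1 for all x ∈ Ω, let ε > 0, and set ϱ(x) := σ(φ(x)/ε). Then ϱ is differentiable on Ω and |∇ϱ(x)| ≤ (2m * c1 / ε) * ϱ(x)^{(2m-1)/(2m)} for all x ∈ Ω. -/

import Mathlib

open Real Filter

/-- Derivative of the truncated cosine-power profile, everywhere. -/
lemma sigma_hasDerivAt (m : ℕ) (hm : 1 ≤ m) (σ : ℝ → ℝ)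
    (hσ : ∀ r : ℝ, σ r = if |r| ≤ Real.pi / 2 then Real.cos r ^ (2 * m) else 0) (r : ℝ) :
    HasDerivAt σ
      (if |r| ≤ Real.pi / 2 then -(2 * m) * Real.cos r ^ (2 * m - 1) * Real.sin r else 0) r := by
  rcases lt_trichotomy |r| (Real.pi / 2) with h | h | h
  · rw [if_pos h.le]
    have hev : σ =ᶠ[nhds r] fun s => Real.cos s ^ (2 * m) := by
      filter_upwards [(isOpen_lt continuous_abs continuous_const).mem_nhds
        (show |r| < Real.pi / 2 from h)] with s hs
      rw [hσ s, if_pos hs.le]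
    have hd : HasDerivAt (fun s => Real.cos s ^ (2 * m))
        ((2 * m : ℕ) * Real.cos r ^ (2 * m - 1) * (-Real.sin r)) r :=
      (Real.hasDerivAt_cos r).pow (2 * m)
    have := hd.congr_of_eventuallyEq hev
    refine this.congr_deriv ?_
    push_cast
    ring
  · -- boundary case |r| = π/2
    rw [if_pos h.le]
    have hcosr : Real.cos r = 0 := by
      rcases abs_eq (by positivity : (0:ℝ) ≤ Real.pi / 2) |>.mp h with h1 | h1
      · rw [h1, Real.cos_pi_div_two]
      · rw [h1, Real.cos_neg, Real.cos_pi_div_two]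
    have hσr : σ r = 0 := by
      rw [hσ r, if_pos h.le, hcosr, zero_pow (by omega)]
    have key : HasDerivAt σ 0 r := by
      rw [hasDerivAt_iff_isLittleO, Asymptotics.isLittleO_iff]
      intro c hc
      have hb : ∀ᶠ s in nhds r, |s - r| < min c 1 := by
        have ht : Filter.Tendsto (fun s : ℝ => |s - r|) (nhds r) (nhds 0) := by
          have := ((continuous_id.sub (continuous_const (y := r))).abs.tendsto r)
          simpa using this
        exact ht.eventually_lt_const (lt_min hc one_pos)
      filter_upwards [hb] with s hs
      have hσs_le : σ s ≤ |s - r| ^ (2 * m) := by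
        rw [hσ s]
        split_ifs with hsb
        · have h1 : Real.cos s ^ (2 * m) ≤ |Real.cos s| ^ (2 * m) := by
            rw [← abs_pow]; exact le_abs_self _
          have h2 : |Real.cos s| ≤ |s - r| := by
            rcases abs_eq (by positivity : (0:ℝ) ≤ Real.pi / 2) |>.mp h with h1' | h1'
            · calc |Real.cos s| = |Real.sin (Real.pi / 2 - s)| := by
                    rw [Real.sin_pi_div_two_sub]
                _ ≤ |Real.pi / 2 - s| := Real.abs_sin_le_abs
                _ = |s - r| := by rw [h1', abs_sub_comm]
            · calc |Real.cos s| = |Real.sin (Real.pi / 2 + s)| := by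
                    rw [show Real.pi / 2 + s = Real.pi / 2 - (-s) by ring,
                      Real.sin_pi_div_two_sub, Real.cos_neg]
                _ ≤ |Real.pi / 2 + s| := Real.abs_sin_le_abs
                _ = |s - r| := by rw [h1']; ring_nf
          calc Real.cos s ^ (2 * m) ≤ |Real.cos s| ^ (2 * m) := h1
            _ ≤ |s - r| ^ (2 * m) := pow_le_pow_left₀ (abs_nonneg _) h2 _
        · positivity
      have hσs_nonneg : 0 ≤ σ s := by
        rw [hσ s]; split_ifs
        · exact (even_two_mul m).pow_nonneg _
        · exact le_refl 0
      have : |s - r| ^ (2 * m) ≤ c * |s - r| := by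
        calc |s - r| ^ (2 * m) ≤ |s - r| ^ 2 :=
              pow_le_pow_of_le_one (abs_nonneg _) (hs.trans_le (min_le_right _ _)).le (by omega)
          _ = |s - r| * |s - r| := sq (|s - r|) ▸ by ring
          _ ≤ c * |s - r| :=
              mul_le_mul_of_nonneg_right (hs.trans_le (min_le_left _ _)).le (abs_nonneg _)
      simp only [hσr, smul_zero, sub_zero, Real.norm_eq_abs]
      rw [abs_of_nonneg hσs_nonneg]
      calc σ s ≤ |s - r| ^ (2 * m) := hσs_le
        _ ≤ c * |s - r| := this
    convert key using 1
    rw [hcosr, zero_pow (by omega)]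
    ring
  · rw [if_neg (not_le.2 h)]
    have hev : σ =ᶠ[nhds r] fun _ => (0 : ℝ) := by
      filter_upwards [(isOpen_lt continuous_const continuous_abs).mem_nhds
        (show Real.pi / 2 < |r| from h)] with s hs
      rw [hσ s, if_neg (not_le.2 hs)]
    exact (hasDerivAt_const r (0:ℝ)).congr_of_eventuallyEq hev


open scoped RealInnerProductSpace

/-- Let `m ≥ 1`, let `σ(r) = cos r ^ (2m)` for `|r| ≤ π/2` and `σ(r) = 0` otherwise, let
`Ω ⊂ ℝ^d` be open, let `φ` be continuously differentiable on `Ω` with `‖∇φ(x)‖ ≤ c1` on `Ω`,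
let `ε > 0`, and set `ϱ(x) := σ(φ(x)/ε)`. Then `ϱ` is differentiable on `Ω` and
`‖∇ϱ(x)‖ ≤ (2m c1/ε) ϱ(x)^{(2m-1)/(2m)}` for all `x ∈ Ω`. -/
theorem stmt_6 (d : ℕ) (m : ℕ) (hm : 1 ≤ m)
    (σ : ℝ → ℝ)
    (hσ : ∀ r : ℝ, σ r = if |r| ≤ Real.pi / 2 then Real.cos r ^ (2 * m) else 0)
    (Ω : Set (EuclideanSpace ℝ (Fin d))) (hΩ : IsOpen Ω)
    (φ : EuclideanSpace ℝ (Fin d) → ℝ) (hφ : ContDiffOn ℝ 1 φ Ω)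
    (c1 : ℝ) (hc1 : ∀ x ∈ Ω, ‖gradient φ x‖ ≤ c1)
    (ε : ℝ) (hε : 0 < ε)
    (ϱ : EuclideanSpace ℝ (Fin d) → ℝ) (hϱ : ∀ x, ϱ x = σ (φ x / ε)) :
    ∀ x ∈ Ω, DifferentiableAt ℝ ϱ x ∧
      ‖gradient ϱ x‖ ≤ (2 * m * c1 / ε) * ϱ x ^ ((2 * (m:ℝ) - 1) / (2 * m)) := by
  intro x hx
  have hϱfun : ϱ = fun y => σ (φ y / ε) := funext hϱ
  have hφd : DifferentiableAt ℝ φ x :=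
    (hφ.contDiffAt (hΩ.mem_nhds hx)).differentiableAt one_ne_zero
  set u : ℝ := φ x / ε with hu
  set D : ℝ := if |u| ≤ Real.pi / 2 then -(2 * m) * Real.cos u ^ (2 * m - 1) * Real.sin u else 0
    with hD
  have hσd : HasDerivAt σ D u := sigma_hasDerivAt m hm σ hσ u
  have hg : HasFDerivAt (fun y => φ y / ε) ((1 / ε) • fderiv ℝ φ x) x := by
    have := hφd.hasFDerivAt.const_mul (1 / ε)
    simpa [div_eq_inv_mul, one_div, funext fun y => (div_eq_inv_mul (φ y) ε)] using this
  have hcomp : HasFDerivAt ϱ (D • ((1 / ε) • fderiv ℝ φ x)) x := by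
    rw [hϱfun]
    exact hσd.comp_hasFDerivAt x hg
  have hdiff : DifferentiableAt ℝ ϱ x := hcomp.differentiableAt
  refine ⟨hdiff, ?_⟩
  -- norm of gradient equals norm of fderiv
  have hnorm : ∀ (f : EuclideanSpace ℝ (Fin d) → ℝ) (y), ‖gradient f y‖ = ‖fderiv ℝ f y‖ := by
    intro f y
    rw [gradient]
    exact LinearIsometryEquiv.norm_map _ _
  have hσnn : 0 ≤ σ u := by
    rw [hσ u]; split_ifs
    · exact (even_two_mul m).pow_nonneg _
    · exact le_rfl
  have hfd : fderiv ℝ ϱ x = D • ((1 / ε) • fderiv ℝ φ x) := hcomp.fderiv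
  have hc1' : ‖fderiv ℝ φ x‖ ≤ c1 := by rw [← hnorm]; exact hc1 x hx
  have hc1nn : 0 ≤ c1 := le_trans (norm_nonneg _) hc1'
  rw [hnorm, hfd]
  have hDb : |D| ≤ 2 * m * σ u ^ ((2 * (m:ℝ) - 1) / (2 * m)) := by
    rw [hD]
    split_ifs with hub
    · have hcos : 0 ≤ Real.cos u := by
        rcases abs_le.1 hub with ⟨h1, h2⟩
        exact Real.cos_nonneg_of_mem_Icc ⟨by linarith, h2⟩
      have hσu : σ u = Real.cos u ^ (2 * m) := by rw [hσ u, if_pos hub]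
      have hrpow : σ u ^ ((2 * (m:ℝ) - 1) / (2 * m)) = Real.cos u ^ (2 * m - 1) := by
        rw [hσu, ← Real.rpow_natCast (Real.cos u) (2 * m), ← Real.rpow_mul hcos]
        have : (↑(2 * m) : ℝ) * ((2 * (m:ℝ) - 1) / (2 * m)) = (2 * (m:ℝ) - 1) := by
          have h2m : (2 * (m:ℝ)) ≠ 0 := by positivity
          field_simp
          push_cast; ring
        rw [this]
        rw [show (2 * (m:ℝ) - 1) = ((2 * m - 1 : ℕ) : ℝ) by
          push_cast [Nat.cast_sub (by omega : 1 ≤ 2 * m)]; ring]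
        exact Real.rpow_natCast _ _
      rw [hrpow, abs_mul, abs_mul]
      have h1 : |(-(2 * (m:ℝ)))| = 2 * m := by
        rw [abs_neg, abs_of_nonneg (by positivity)]
      have h2 : |Real.cos u ^ (2 * m - 1)| = Real.cos u ^ (2 * m - 1) :=
        abs_of_nonneg (pow_nonneg hcos _)
      rw [h1, h2]
      calc 2 * (m:ℝ) * Real.cos u ^ (2 * m - 1) * |Real.sin u|
          ≤ 2 * (m:ℝ) * Real.cos u ^ (2 * m - 1) * 1 := by
            exact mul_le_mul_of_nonneg_left
              (abs_le.2 ⟨Real.neg_one_le_sin u, Real.sin_le_one u⟩) (by positivity)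
        _ = 2 * (m:ℝ) * Real.cos u ^ (2 * m - 1) := by ring
    · simp only [abs_zero]
      positivity
  calc ‖D • ((1 / ε) • fderiv ℝ φ x)‖ = |D| * ((1 / ε) * ‖fderiv ℝ φ x‖) := by
        rw [norm_smul, norm_smul, Real.norm_eq_abs, Real.norm_eq_abs,
          abs_of_nonneg (by positivity : (0:ℝ) ≤ 1 / ε)]
    _ ≤ (2 * m * σ u ^ ((2 * (m:ℝ) - 1) / (2 * m))) * ((1 / ε) * c1) := by
        apply mul_le_mul hDb (mul_le_mul_of_nonneg_left hc1' (by positivity))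
          (by positivity) (by positivity)
    _ = (2 * m * c1 / ε) * σ u ^ ((2 * (m:ℝ) - 1) / (2 * m)) := by ring
    _ = (2 * m * c1 / ε) * ϱ x ^ ((2 * (m:ℝ) - 1) / (2 * m)) := by rw [hϱ x]
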